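/- Let n(z) = e^{-1/z} z^{-(n+2)} and let the measure μ on ℝⁿ × ℝ⁺ have density e^{-z}. Let φ(x) = max{ ‖x‖_∞, 1_H^∞(x) } where H = { x : x₁ ≤ n+2 } (i.e. φ = ‖·‖_C on H and +∞ off H, with C = [-1,1]ⁿ). Then ∫_{ℝⁿ} e^{-φ} = 2ⁿ ∫_0^{n+2} zⁿ e^{-z} dz + 2^{n-1} ∫_{n+2}^∞ (n+2+z) z^{n-1} e^{-z} dz = 2ⁿ n! (1 - R(n)) where R(n) = (1/n!) ∫_{n+2}^∞ ((z-(n+2))/2) z^{n-1} e^{-z} dz. -/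

import Mathlib

open MeasureTheory ENNReal Set

noncomputable def expNeg (t : ℝ≥0∞) : ℝ≥0∞ :=
  if t = ∞ then 0 else ENNReal.ofReal (Real.exp (-t.toReal))

/-- `R(n) = (1/n!) ∫_{n+2}^∞ ((z-(n+2))/2) z^{n-1} e^{-z} dz`. -/
noncomputable def Rfun (n : ℕ) : ℝ :=
  (1 / (n.factorial : ℝ)) *
    ∫ z in Ioi ((n : ℝ) + 2), ((z - ((n : ℝ) + 2)) / 2) * z ^ (n - 1) * Real.exp (-z)

lemma intOnPow (k : ℕ) {a : ℝ} (ha : 0 ≤ a) :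
    IntegrableOn (fun z : ℝ => z ^ k * Real.exp (-z)) (Ioi a) := by
  have h := Real.GammaIntegral_convergent (s := (k : ℝ) + 1) (by positivity)
  have h2 : IntegrableOn (fun x : ℝ => x ^ k * Real.exp (-x)) (Ioi 0) := by
    have : (fun x : ℝ => Real.exp (-x) * x ^ ((k : ℝ) + 1 - 1)) =
        fun x : ℝ => Real.exp (-x) * x ^ (k : ℝ) := by
      funext x; norm_num
    rw [this] at h
    refine h.congr_fun (fun x hx => ?_) measurableSet_Ioi
    beta_reduce; rw [Real.rpow_natCast, mul_comm]
  exact h2.mono_set (Ioi_subset_Ioi ha)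

lemma gammaFact (n : ℕ) :
    (∫ z in Ioi (0:ℝ), z ^ n * Real.exp (-z)) = (n.factorial : ℝ) := by
  have h := Real.Gamma_eq_integral (s := (n : ℝ) + 1) (by positivity)
  rw [Real.Gamma_nat_eq_factorial] at h
  rw [h]
  refine setIntegral_congr_fun measurableSet_Ioi (fun x hx => ?_)
  rw [show ((n:ℝ) + 1 - 1) = (n : ℝ) by ring, Real.rpow_natCast, mul_comm]

lemma expLint (a : ℝ) :
    ENNReal.ofReal (Real.exp (-a)) = ∫⁻ z in Ioi a, ENNReal.ofReal (Real.exp (-z)) := by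
  rw [← ofReal_integral_eq_lintegral_ofReal, integral_exp_neg_Ioi]
  · have := exp_neg_integrableOn_Ioi a (b := 1) one_pos
    exact (by simpa using this : IntegrableOn (fun x => Real.exp (-x)) (Ioi a))
  · exact Filter.Eventually.of_forall fun x => (Real.exp_pos _).le

lemma interVol {z c : ℝ} (hz : 0 < z) (hc : 0 < c) :
    volume (Ioo (-z) z ∩ Iic c) = ENNReal.ofReal (min z c + z) := by
  rcases le_or_gt z c with h | h
  · have hsub : Ioo (-z) z ⊆ Iic c := fun x hx => hx.2.le.trans h
    rw [inter_eq_left.2 hsub, Real.volume_Ioo, min_eq_left h]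
    ring_nf
  · have : Ioo (-z) z ∩ Iic c = Ioc (-z) c := by
      ext x
      simp only [mem_inter_iff, mem_Ioo, mem_Iic, mem_Ioc]
      constructor
      · rintro ⟨⟨h1, _⟩, h3⟩; exact ⟨h1, h3⟩
      · rintro ⟨h1, h2⟩; exact ⟨⟨h1, lt_of_le_of_lt h2 h⟩, h2⟩
    rw [this, Real.volume_Ioc, min_eq_right h.le]
    ring_nf

lemma cubeVol (m : ℕ) {z c : ℝ} (hz : 0 < z) (hc : 0 < c) :
    volume {x : Fin (m+1) → ℝ | ‖x‖ < z ∧ x 0 ≤ c} =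
      ENNReal.ofReal ((min z c + z) * (2*z) ^ m) := by
  have hset : {x : Fin (m+1) → ℝ | ‖x‖ < z ∧ x 0 ≤ c} =
      Set.pi univ (fun i => if i = 0 then Ioo (-z) z ∩ Iic c else Ioo (-z) z) := by
    ext x
    simp only [mem_setOf_eq, pi_norm_lt_iff hz, Set.mem_pi, mem_univ, forall_true_left,
      Real.norm_eq_abs, abs_lt]
    constructor
    · rintro ⟨h1, h2⟩ i
      by_cases hi : i = 0
      · subst hi; simp only [if_pos rfl]; exact ⟨h1 0, h2⟩
      · simp only [if_neg hi]; exact h1 i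
    · intro h
      refine ⟨fun i => ?_, ?_⟩
      · have := h i
        by_cases hi : i = 0
        · subst hi; simp only [if_pos rfl] at this; exact this.1
        · simpa [if_neg hi] using this
      · have := h 0; simp only [if_pos rfl] at this; exact this.2
  rw [hset, volume_pi_pi]
  rw [Fin.prod_univ_succ]
  simp only [reduceIte]
  have : ∀ i : Fin m, (if (Fin.succ i) = 0 then Ioo (-z) z ∩ Iic c else Ioo (-z) z)
      = Ioo (-z) z := fun i => if_neg (Fin.succ_ne_zero i)
  rw [Finset.prod_congr rfl (fun i _ => by rw [this i]), Finset.prod_const,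
    Finset.card_univ, Fintype.card_fin, interVol hz hc, Real.volume_Ioo,
    show z - -z = 2*z by ring, ← ENNReal.ofReal_pow (by positivity),
    ← ENNReal.ofReal_mul (by positivity)]

lemma core (m : ℕ) {c : ℝ} (hc : 0 < c) :
    (∫⁻ x in {x : Fin (m+1) → ℝ | x 0 ≤ c}, ENNReal.ofReal (Real.exp (-‖x‖))) =
      ∫⁻ z in Ioi (0:ℝ), ENNReal.ofReal (Real.exp (-z)) *
        ENNReal.ofReal ((min z c + z) * (2*z) ^ m) := by
  set g : ℝ → ℝ≥0∞ := fun z => ENNReal.ofReal (Real.exp (-z)) with hg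
  have hgm : Measurable g := by
    exact ENNReal.measurable_ofReal.comp (Real.continuous_exp.measurable.comp measurable_neg)
  set H : Set (Fin (m+1) → ℝ) := {x | x 0 ≤ c} with hH
  have hHm : MeasurableSet H := measurableSet_le (measurable_pi_apply 0) measurable_const
  have hSm : ∀ z : ℝ, MeasurableSet {x : Fin (m+1) → ℝ | ‖x‖ < z} := fun z =>
    (isOpen_lt continuous_norm continuous_const).measurableSet
  have step1 : (∫⁻ x in H, ENNReal.ofReal (Real.exp (-‖x‖))) =
      ∫⁻ x in H, ∫⁻ z, (Ioi ‖x‖).indicator g z := by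
    refine lintegral_congr fun x => ?_
    rw [lintegral_indicator measurableSet_Ioi]
    exact expLint ‖x‖
  have hmeas : AEMeasurable (Function.uncurry fun (x : Fin (m+1) → ℝ) (z : ℝ) =>
      (Ioi ‖x‖).indicator g z) ((volume.restrict H).prod volume) := by
    have heq : (Function.uncurry fun (x : Fin (m+1) → ℝ) (z : ℝ) =>
        (Ioi ‖x‖).indicator g z) =
        ({p : (Fin (m+1) → ℝ) × ℝ | ‖p.1‖ < p.2}).indicator (fun p => g p.2) := by
      funext p
      simp only [Function.uncurry, Set.indicator_apply, mem_Ioi, mem_setOf_eq]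
    rw [heq]
    exact ((hgm.comp measurable_snd).indicator
      ((isOpen_lt continuous_fst.norm continuous_snd).measurableSet)).aemeasurable
  have step2 := lintegral_lintegral_swap hmeas
  rw [step1, step2]
  have step3 : ∀ z : ℝ, (∫⁻ x in H, (Ioi ‖x‖).indicator g z) =
      g z * volume {x : Fin (m+1) → ℝ | ‖x‖ < z ∧ x 0 ≤ c} := by
    intro z
    have : (fun x : Fin (m+1) → ℝ => (Ioi ‖x‖).indicator g z) =
        fun x => ({x : Fin (m+1) → ℝ | ‖x‖ < z}).indicator (fun _ => g z) x := by
      funext x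
      simp only [Set.indicator_apply, mem_Ioi, mem_setOf_eq]
    rw [this, lintegral_indicator_const (hSm z), Measure.restrict_apply (hSm z)]
    congr 1
  rw [lintegral_congr step3, ← lintegral_indicator (μ := volume) measurableSet_Ioi]
  refine lintegral_congr fun z => ?_
  by_cases hz : 0 < z
  · rw [Set.indicator_of_mem (show z ∈ Ioi 0 from hz), cubeVol m hz hc]
  · rw [Set.indicator_of_notMem (show z ∉ Ioi 0 from hz)]
    have : {x : Fin (m+1) → ℝ | ‖x‖ < z ∧ x 0 ≤ c} = ∅ := by
      ext x
      simp only [mem_setOf_eq, mem_empty_iff_false, iff_false, not_and]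
      intro h
      exact absurd (norm_nonneg x |>.trans_lt h) hz
    rw [this, measure_empty, mul_zero]

lemma intOnPoly (m : ℕ) {c : ℝ} (hc : 0 < c) :
    IntegrableOn (fun z : ℝ => (c + z) * z ^ m * Real.exp (-z)) (Ioi c) := by
  have h : (fun z : ℝ => c * (z ^ m * Real.exp (-z)) + z ^ (m+1) * Real.exp (-z)) =
      fun z : ℝ => (c + z) * z ^ m * Real.exp (-z) := by
    funext z; ring
  rw [← h]
  exact ((intOnPow m hc.le).const_mul c).add (intOnPow (m+1) hc.le)

lemma intOnIoc (m : ℕ) (c : ℝ) :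
    IntegrableOn (fun z : ℝ => z ^ m * Real.exp (-z)) (Ioc 0 c) := by
  exact ((continuous_pow m).mul (Real.continuous_exp.comp continuous_neg)).integrableOn_Icc
    |>.mono_set Ioc_subset_Icc_self

lemma intOnIoo (m : ℕ) (c : ℝ) :
    IntegrableOn (fun z : ℝ => z ^ m * Real.exp (-z)) (Ioo 0 c) := by
  exact ((continuous_pow m).mul (Real.continuous_exp.comp continuous_neg)).integrableOn_Icc
    |>.mono_set Ioo_subset_Icc_self

lemma zint (m : ℕ) {c : ℝ} (hc : 0 < c) :
    (∫⁻ z in Ioi (0:ℝ), ENNReal.ofReal (Real.exp (-z)) *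
        ENNReal.ofReal ((min z c + z) * (2*z) ^ m)) =
      ENNReal.ofReal ((2:ℝ) ^ (m+1) * ∫ z in Ioo (0:ℝ) c, z ^ (m+1) * Real.exp (-z)) +
      ENNReal.ofReal ((2:ℝ) ^ m * ∫ z in Ioi c, (c + z) * z ^ m * Real.exp (-z)) := by
  rw [← Ioc_union_Ioi_eq_Ioi hc.le, lintegral_union measurableSet_Ioi (Ioc_disjoint_Ioi le_rfl)]
  congr 1
  · rw [setLIntegral_congr (Ioo_ae_eq_Ioc (a := (0:ℝ)) (b := c)).symm]
    have heq : ∀ z ∈ Ioo (0:ℝ) c,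
        ENNReal.ofReal (Real.exp (-z)) * ENNReal.ofReal ((min z c + z) * (2*z) ^ m) =
        ENNReal.ofReal ((2:ℝ) ^ (m+1) * (z ^ (m+1) * Real.exp (-z))) := by
      intro z hz
      rw [min_eq_left hz.2.le, ← ENNReal.ofReal_mul (Real.exp_pos _).le]
      congr 1; ring
    rw [setLIntegral_congr_fun measurableSet_Ioo heq,
      ← ofReal_integral_eq_lintegral_ofReal (((intOnIoo (m+1) c).const_mul _))
        ((ae_restrict_iff' measurableSet_Ioo).2 (ae_of_all _ fun z hz => by
          have := hz.1; positivity)),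
      integral_const_mul]
  · have heq : ∀ z ∈ Ioi c,
        ENNReal.ofReal (Real.exp (-z)) * ENNReal.ofReal ((min z c + z) * (2*z) ^ m) =
        ENNReal.ofReal ((2:ℝ) ^ m * ((c + z) * z ^ m * Real.exp (-z))) := by
      intro z hz
      rw [min_eq_right (le_of_lt hz), ← ENNReal.ofReal_mul (Real.exp_pos _).le]
      congr 1; ring
    rw [setLIntegral_congr_fun measurableSet_Ioi heq,
      ← ofReal_integral_eq_lintegral_ofReal ((intOnPoly m hc).const_mul _)
        ((ae_restrict_iff' measurableSet_Ioi).2 (ae_of_all _ fun z hz => by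
          have h1 : (0:ℝ) < z := hc.trans hz
          have h2 : (0:ℝ) ≤ c + z := by linarith
          positivity)),
      integral_const_mul]

/-- For `φ = max(‖·‖_C, 1_H^∞)` with `C = [-1,1]ⁿ` and `H = {x : x₁ ≤ n+2}`,
`∫ e^{-φ} = 2ⁿ ∫_0^{n+2} zⁿ e^{-z} dz + 2^{n-1} ∫_{n+2}^∞ (n+2+z) z^{n-1} e^{-z} dz
          = 2ⁿ n! (1 - R(n))`.
(The sup norm on `Fin n → ℝ` is the gauge of the cube `C`.) -/
theorem vol_phi_eq (n : ℕ) (hn : 0 < n) (φ : (Fin n → ℝ) → ℝ≥0∞)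
    (hφ : ∀ x, φ x = if x ⟨0, hn⟩ ≤ (n : ℝ) + 2 then ENNReal.ofReal ‖x‖ else ∞) :
    (∫⁻ x, expNeg (φ x)) =
        ENNReal.ofReal ((2 : ℝ) ^ n * ∫ z in Ioo (0 : ℝ) ((n : ℝ) + 2), z ^ n * Real.exp (-z))
          + ENNReal.ofReal ((2 : ℝ) ^ (n - 1) *
              ∫ z in Ioi ((n : ℝ) + 2), ((n : ℝ) + 2 + z) * z ^ (n - 1) * Real.exp (-z)) ∧
      (∫⁻ x, expNeg (φ x)) =
        ENNReal.ofReal ((2 : ℝ) ^ n * (n.factorial : ℝ) * (1 - Rfun n)) := by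
  obtain ⟨m, rfl⟩ : ∃ m, n = m + 1 := ⟨n - 1, (Nat.succ_pred_eq_of_pos hn).symm⟩
  simp only [Nat.add_sub_cancel] at *
  set c : ℝ := ((m + 1 : ℕ) : ℝ) + 2 with hcdef
  have hc : (0:ℝ) < c := by positivity
  have h0 : (⟨0, hn⟩ : Fin (m+1)) = 0 := by ext; simp
  -- reduce the lintegral
  have key : (∫⁻ x, expNeg (φ x)) =
      ∫⁻ x in {x : Fin (m+1) → ℝ | x 0 ≤ c}, ENNReal.ofReal (Real.exp (-‖x‖)) := by
    rw [← lintegral_indicator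
      (measurableSet_le (measurable_pi_apply 0) measurable_const)]
    refine lintegral_congr fun x => ?_
    rw [hφ x, h0]
    by_cases hx : x 0 ≤ c
    · rw [if_pos hx, Set.indicator_of_mem (show x ∈ {x : Fin (m+1) → ℝ | x 0 ≤ c} from hx)]
      simp [expNeg, ENNReal.toReal_ofReal (norm_nonneg x)]
    · rw [if_neg hx,
        Set.indicator_of_notMem (show x ∉ {x : Fin (m+1) → ℝ | x 0 ≤ c} from hx)]
      simp [expNeg]
  rw [key, core m hc, zint m hc]
  refine ⟨rfl, ?_⟩
  -- now the real identity
  have hF0 : ((m+1).factorial : ℝ) ≠ 0 := Nat.cast_ne_zero.2 (Nat.factorial_ne_zero _)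
  set P : ℝ := ∫ z in Ioi c, z ^ m * Real.exp (-z) with hPdef
  set Q : ℝ := ∫ z in Ioi c, z ^ (m+1) * Real.exp (-z) with hQdef
  have hsplit : (∫ z in Ioo (0:ℝ) c, z ^ (m+1) * Real.exp (-z)) =
      ((m+1).factorial : ℝ) - Q := by
    have hu : (∫ z in Ioi (0:ℝ), z ^ (m+1) * Real.exp (-z)) =
        (∫ z in Ioc (0:ℝ) c, z ^ (m+1) * Real.exp (-z)) + Q := by
      rw [← Ioc_union_Ioi_eq_Ioi hc.le,
        setIntegral_union (Ioc_disjoint_Ioi le_rfl) measurableSet_Ioi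
          (intOnIoc (m+1) c)
          (intOnPow (m+1) hc.le)]
    rw [gammaFact (m+1), integral_Ioc_eq_integral_Ioo] at hu
    linarith
  have hB : (∫ z in Ioi c, (c + z) * z ^ m * Real.exp (-z)) = c * P + Q := by
    have h : (fun z : ℝ => (c + z) * z ^ m * Real.exp (-z)) =
        fun z : ℝ => c * (z ^ m * Real.exp (-z)) + z ^ (m+1) * Real.exp (-z) := by
      funext z; ring
    rw [h, integral_add ((intOnPow m hc.le).const_mul c) (intOnPow (m+1) hc.le),
      integral_const_mul]
  have hRv : Rfun (m+1) = (1 / ((m+1).factorial : ℝ)) * ((Q - c * P) / 2) := by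
    rw [Rfun]
    simp only [Nat.add_sub_cancel]
    rw [← hcdef]
    congr 1
    have h : (fun z : ℝ => ((z - c) / 2) * z ^ m * Real.exp (-z)) =
        fun z : ℝ => (1/2) * (z ^ (m+1) * Real.exp (-z)) + (-(c/2)) * (z ^ m * Real.exp (-z)) := by
      funext z; ring
    rw [h, integral_add ((intOnPow (m+1) hc.le).const_mul _) ((intOnPow m hc.le).const_mul _),
      integral_const_mul, integral_const_mul]
    ring
  have h1 : (0:ℝ) ≤ (2:ℝ) ^ (m+1) * ∫ z in Ioo (0:ℝ) c, z ^ (m+1) * Real.exp (-z) := by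
    have := setIntegral_nonneg (μ := volume) measurableSet_Ioo
      (fun z (hz : z ∈ Ioo (0:ℝ) c) => by
        have := hz.1; positivity : ∀ z ∈ Ioo (0:ℝ) c, 0 ≤ z ^ (m+1) * Real.exp (-z))
    positivity
  have h2 : (0:ℝ) ≤ (2:ℝ) ^ m * ∫ z in Ioi c, (c + z) * z ^ m * Real.exp (-z) := by
    have := setIntegral_nonneg (μ := volume) measurableSet_Ioi
      (fun z (hz : z ∈ Ioi c) => by
        have h1 : (0:ℝ) < z := hc.trans hz
        have h2 : (0:ℝ) ≤ c + z := by linarith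
        positivity : ∀ z ∈ Ioi c, 0 ≤ (c + z) * z ^ m * Real.exp (-z))
    positivity
  rw [← ENNReal.ofReal_add h1 h2]
  congr 1
  rw [hsplit, hB, hRv]
  field_simp
  ring
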